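/- arXiv:1912.08779 — 2 statements merged into one kernel-verified Lean document; each statement's English description precedes it below -/
import Mathlib

section
/- Let c_1 > c_2 > ... > c_s > 1 = c_{s+1} = ... = c_n be positive integers with c_1,...,c_s pairwise coprime, and let S = k[x_1,...,x_n] be graded by wt(x_i) = c_i. For the degree d = q·(c_1···c_s) partial Fermat count: the number M_{s+1} of degree D := Σ_{i=1}^n (d - 2c_i) + 1 monomials divisible by x_n^{d-1} but not by any x_j^{d/c_j - 1} for j ≠ n equals ∏_{j=1}^{n-1} (d/c_j - 1). -/
open Finset

/-- Weighted monomial count for the partial Fermat: with weights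
`c 0 > c 1 > ... > c (s-1) > 1 = c s = ... = c n` (indices in `Fin (n+1)`, the first `s`
weights pairwise coprime and `> 1`, the rest equal to `1`), `d = q·(c_1 ⋯ c_s)`,
`D = Σ_i (d - 2 c_i) + 1`, the number of degree-`D` monomials divisible by
`x_n^{d-1}` but not divisible by any `x_j^{d/c_j - 1}` for `j ≠ n` equals
`∏_{j ≠ n} (d/c_j - 1)`. -/
theorem stmt3 (n s : ℕ) (hs : s ≤ n) (c : Fin (n + 1) → ℕ)
    (hdec : ∀ i j : Fin (n + 1), i < j → (j : ℕ) < s → c j < c i)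
    (hgt1 : ∀ i : Fin (n + 1), (i : ℕ) < s → 1 < c i)
    (hone : ∀ i : Fin (n + 1), s ≤ (i : ℕ) → c i = 1)
    (hcop : ∀ i j : Fin (n + 1), (i : ℕ) < s → (j : ℕ) < s → i ≠ j →
      Nat.Coprime (c i) (c j))
    (q d : ℕ) (hq : 0 < q)
    (hd : d = q * ∏ i ∈ Finset.univ.filter (fun i : Fin (n + 1) => (i : ℕ) < s), c i)
    (hd2 : ∀ i, 2 * c i ≤ d)
    (D : ℕ) (hD : D = (∑ i, (d - 2 * c i)) + 1) :
    Nat.card {a : Fin (n + 1) → ℕ //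
        (∑ i, c i * a i = D) ∧
        d - 1 ≤ a (Fin.last n) ∧
        ∀ j : Fin (n + 1), j ≠ Fin.last n → a j < d / c j - 1} =
      ∏ j ∈ Finset.univ.erase (Fin.last n), (d / c j - 1) := by
  classical
  set L := Fin.last n with hL
  have hcL : c L = 1 := hone L (by rw [hL, Fin.val_last]; exact hs)
  have hd2' : 2 ≤ d := by have := hd2 L; rw [hcL] at this; omega
  have hcpos : ∀ j, 0 < c j := by
    intro j
    by_cases hjs : (j : ℕ) < s
    · exact lt_trans one_pos (hgt1 j hjs)
    · rw [hone j (le_of_not_gt hjs)]; exact one_pos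
  have hdvd : ∀ j, c j ∣ d := by
    intro j
    by_cases hjs : (j : ℕ) < s
    · rw [hd]
      exact Dvd.dvd.mul_left (Finset.dvd_prod_of_mem _ (by simp [hjs])) q
    · rw [hone j (le_of_not_gt hjs)]; exact one_dvd _
  have hq2 : ∀ j, 2 ≤ d / c j := by
    intro j
    rw [Nat.le_div_iff_mul_le (hcpos j)]
    have := hd2 j; omega
  have hmul : ∀ j, c j * (d / c j - 2) = d - 2 * c j := by
    intro j
    rw [Nat.mul_sub, Nat.mul_div_cancel' (hdvd j)]
    ring_nf
  have hDval : D = (∑ j ∈ Finset.univ.erase L, (d - 2 * c j)) + (d - 1) := by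
    rw [hD, ← Finset.add_sum_erase _ _ (Finset.mem_univ L), hcL]
    omega
  -- the sum over the erase of the "rest" part
  set Srest : (Fin (n + 1) → ℕ) → ℕ :=
    fun a => ∑ j ∈ Finset.univ.erase L, c j * a j with hSrest
  have hsplit : ∀ a : Fin (n + 1) → ℕ, ∑ i, c i * a i = a L + Srest a := by
    intro a
    rw [← Finset.add_sum_erase _ _ (Finset.mem_univ L), hcL, one_mul]
  have hSle : ∀ a : Fin (n + 1) → ℕ,
      (∀ j : Fin (n + 1), j ≠ L → a j < d / c j - 1) →
      Srest a ≤ ∑ j ∈ Finset.univ.erase L, (d - 2 * c j) := by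
    intro a ha
    apply Finset.sum_le_sum
    intro j hj
    have hjL : j ≠ L := (Finset.mem_erase.mp hj).1
    have h1 := ha j hjL
    have h2 := hq2 j
    calc c j * a j ≤ c j * (d / c j - 2) :=
          Nat.mul_le_mul_left _ (by omega)
      _ = d - 2 * c j := hmul j
  -- build the equivalence
  have e : {a : Fin (n + 1) → ℕ //
        (∑ i, c i * a i = D) ∧
        d - 1 ≤ a L ∧
        ∀ j : Fin (n + 1), j ≠ L → a j < d / c j - 1} ≃
      ((j : {j : Fin (n + 1) // j ≠ L}) → Fin (d / c j.1 - 1)) := by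
    refine
      { toFun := fun a j => ⟨a.1 j.1, a.2.2.2 j.1 j.2⟩
        invFun := fun b => ?_
        left_inv := ?_
        right_inv := ?_ }
    · refine ⟨fun i => if h : i = L then
        D - Srest (fun i' => if h' : i' = L then 0 else b ⟨i', h'⟩)
        else b ⟨i, h⟩, ?_, ?_, ?_⟩
      all_goals
        set a : Fin (n + 1) → ℕ := fun i => if h : i = L then
          D - Srest (fun i' => if h' : i' = L then 0 else b ⟨i', h'⟩)
          else b ⟨i, h⟩ with hadef
        have habound : ∀ j : Fin (n + 1), j ≠ L → a j < d / c j - 1 := by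
          intro j hj
          simp only [hadef, dif_neg hj]
          exact (b ⟨j, hj⟩).2
        have haux : (fun i' => if h' : i' = L then 0 else (b ⟨i', h'⟩ : ℕ)) = fun i' =>
            if h' : i' = L then 0 else a i' := by
          funext i'
          by_cases h' : i' = L
          · simp [h']
          · simp only [dif_neg h', hadef]
        have hSeq : Srest (fun i' => if h' : i' = L then 0 else (b ⟨i', h'⟩ : ℕ)) = Srest a := by
          rw [haux, hSrest]
          refine Finset.sum_congr rfl fun j hj => ?_
          simp only [dif_neg (Finset.mem_erase.mp hj).1]
        have hSb : Srest a ≤ ∑ j ∈ Finset.univ.erase L, (d - 2 * c j) := hSle a habound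
        have haL : a L = D - Srest a := by
          have h1 : a L = D - Srest (fun i' => if h' : i' = L then 0 else (b ⟨i', h'⟩ : ℕ)) := by
            simp [hadef]
          rw [h1, hSeq]
      · -- sum condition
        rw [hsplit a, haL]
        omega
      · -- a L ≥ d - 1
        rw [haL]
        omega
      · exact habound
    · rintro ⟨a, ha1, ha2, ha3⟩
      apply Subtype.ext
      funext i
      by_cases h : i = L
      · subst h
        have hSeq : Srest (fun i' => if h' : i' = L then 0 else
            (a i' : ℕ)) = Srest a := by
          refine Finset.sum_congr rfl fun j hj => ?_
          simp only [dif_neg (Finset.mem_erase.mp hj).1]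
        rw [hsplit a] at ha1
        simp only [dif_pos, hSeq]
        omega
      · simp only [dif_neg h]
    · intro b
      funext j
      apply Fin.ext
      simp only [dif_neg j.2]
  rw [Nat.card_congr e, Nat.card_pi]
  simp only [Nat.card_eq_fintype_card, Fintype.card_fin]
  have hmem : ∀ x : Fin (n + 1), x ∈ Finset.univ.erase L ↔ x ≠ L := by
    intro x; simp
  exact (Finset.prod_subtype (Finset.univ.erase L) hmem (fun j => d / c j - 1)).symm
end

section
/- Let F ∈ R[x_1,x_2,x_3,x_4] be quasihomogeneous of degree 6 for weights (3,2,1,1) with F mod t ≠ 0, written F = a(t)x_1^2 + b(t)x_2^3 + G with G ∈ (x_3,x_4). If for every N ≥ 1 the inequality (2 + 48/N^2)·mult_ρ(F) ≤ 2w_1 + 3w_2 + (32w_1 + 36w_2 + 60w_3 + 60w_4)/N^2 holds for ρ = (2,1,N,N) and ρ = (1,1,N,N), then a(0) ≠ 0 and b(0) ≠ 0. -/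
open MvPolynomial

/-- The action of the diagonal one-parameter subgroup `ρ` with weights `w`,
substituting `x_i ↦ t^{w i} x_i`. -/
noncomputable def rhoAct {R : Type*} [CommRing R] {n : ℕ} (t : R) (w : Fin n → ℕ)
    (F : MvPolynomial (Fin n) R) : MvPolynomial (Fin n) R :=
  MvPolynomial.aeval (fun i => MvPolynomial.C (t ^ w i) * MvPolynomial.X i) F

/-- `mult_ρ(F)`: the largest `N` such that `ρ·F ∈ (t^N)`. -/
noncomputable def multRho {R : Type*} [CommRing R] {n : ℕ} (t : R) (w : Fin n → ℕ)
    (F : MvPolynomial (Fin n) R) : ℕ :=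
  sSup {N : ℕ | ∀ d, t ^ N ∣ (rhoAct t w F).coeff d}

lemma rhoAct_monomial {R : Type*} [CommRing R] {n : ℕ} (t : R) (w : Fin n → ℕ)
    (d : Fin n →₀ ℕ) (c : R) :
    rhoAct t w (monomial d c) = monomial d (t ^ (∑ i, w i * d i) * c) := by
  classical
  rw [rhoAct, aeval_monomial, monomial_eq, algebraMap_eq]
  have h1 : (d.prod fun i k => (C (t ^ w i) * X i : MvPolynomial (Fin n) R) ^ k)
      = C (t ^ (∑ i, w i * d i)) * d.prod fun i k => (X i : MvPolynomial (Fin n) R) ^ k := by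
    rw [Finsupp.prod, Finsupp.prod]
    have : ∑ i, w i * d i = ∑ i ∈ d.support, w i * d i := by
      rw [Finset.sum_subset (Finset.subset_univ d.support)]
      intro i _ hi
      simp [Finsupp.notMem_support_iff.mp hi]
    rw [this]
    calc ∏ i ∈ d.support, (C (t ^ w i) * X i : MvPolynomial (Fin n) R) ^ d i
        = ∏ i ∈ d.support, (C ((t ^ (w i * d i)) : R) : MvPolynomial (Fin n) R) * X i ^ d i := by
          apply Finset.prod_congr rfl; intro i _; rw [mul_pow, ← C_pow, ← pow_mul]
      _ = (∏ i ∈ d.support, (C ((t ^ (w i * d i)) : R) : MvPolynomial (Fin n) R)) *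
            ∏ i ∈ d.support, (X i : MvPolynomial (Fin n) R) ^ d i := Finset.prod_mul_distrib
      _ = C (t ^ ∑ i ∈ d.support, w i * d i) * ∏ i ∈ d.support, (X i : MvPolynomial (Fin n) R) ^ d i := by
          rw [← map_prod (C : R →+* MvPolynomial (Fin n) R), Finset.prod_pow_eq_pow_sum]
  rw [h1, C_mul]
  ring

lemma coeff_rhoAct {R : Type*} [CommRing R] {n : ℕ} (t : R) (w : Fin n → ℕ)
    (F : MvPolynomial (Fin n) R) (d : Fin n →₀ ℕ) :
    (rhoAct t w F).coeff d = t ^ (∑ i, w i * d i) * F.coeff d := by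
  classical
  have h : rhoAct t w F = ∑ e ∈ F.support, monomial e (t ^ (∑ i, w i * e i) * F.coeff e) := by
    conv_lhs => rw [F.as_sum]
    rw [rhoAct, map_sum]
    exact Finset.sum_congr rfl fun e _ => rhoAct_monomial t w e (F.coeff e)
  rw [h, coeff_sum]
  simp only [coeff_monomial]
  rw [Finset.sum_ite_eq' F.support d (fun e => t ^ (∑ i, w i * e i) * F.coeff e)]
  by_cases hd : d ∈ F.support
  · simp [hd]
  · rw [if_neg hd, notMem_support_iff.mp hd, mul_zero]

lemma le_multRho {R : Type*} [CommRing R] [IsDomain R] {n : ℕ} {t : R} (ht : t ≠ 0)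
    (w : Fin n → ℕ) {F : MvPolynomial (Fin n) R} {d₀ : Fin n →₀ ℕ}
    (hd₀ : ¬ t ∣ F.coeff d₀) {m : ℕ}
    (hm : ∀ d, t ^ m ∣ (rhoAct t w F).coeff d) : m ≤ multRho t w F := by
  have hmem : m ∈ {N : ℕ | ∀ d, t ^ N ∣ (rhoAct t w F).coeff d} := hm
  apply le_csSup _ hmem
  refine ⟨∑ i, w i * d₀ i, fun N hN => ?_⟩
  by_contra hlt
  push_neg at hlt
  have h1 : t ^ N ∣ (rhoAct t w F).coeff d₀ := hN d₀
  rw [coeff_rhoAct] at h1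
  obtain ⟨u, hu⟩ := (pow_dvd_pow t hlt).trans h1
  apply hd₀
  have heq : t ^ (∑ i, w i * d₀ i) * F.coeff d₀ = t ^ (∑ i, w i * d₀ i) * (t * u) := by
    rw [hu, pow_succ]; ring
  exact ⟨u, mul_left_cancel₀ (pow_ne_zero _ ht) heq⟩
/-- Let `F ∈ R[x₁,x₂,x₃,x₄]` be quasihomogeneous of degree `6` for weights
`(3,2,1,1)` with `F mod t ≠ 0`, written `F = a(t)x₁² + b(t)x₂³ + G` with `G ∈ (x₃,x₄)`.
If for every `N ≥ 1` the inequality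
`(2 + 48/N²)·mult_ρ(F) ≤ 2w₁ + 3w₂ + (32w₁ + 36w₂ + 60w₃ + 60w₄)/N²` holds for
`ρ = (2,1,N,N)` and `ρ = (1,1,N,N)`, then `a(0) ≠ 0` and `b(0) ≠ 0`. -/
theorem stmt6 {R : Type*} [CommRing R] [IsDomain R] [IsDiscreteValuationRing R]
    (t : R) (ht : Irreducible t)
    (F G : MvPolynomial (Fin 4) R) (a b : R)
    (hhom : MvPolynomial.IsWeightedHomogeneous ![3, 2, 1, 1] F 6)
    (hF : ∃ d, ¬ t ∣ F.coeff d)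
    (hdecomp : F = MvPolynomial.C a * MvPolynomial.X 0 ^ 2
        + MvPolynomial.C b * MvPolynomial.X 1 ^ 3 + G)
    (hG : G ∈ Ideal.span ({MvPolynomial.X 2, MvPolynomial.X 3} :
        Set (MvPolynomial (Fin 4) R)))
    (hineq : ∀ N : ℕ, 1 ≤ N →
      ((2 + 48 / (N : ℚ) ^ 2) * (multRho t ![2, 1, N, N] F : ℚ) ≤
          2 * 2 + 3 * 1 + (32 * 2 + 36 * 1 + 60 * (N : ℚ) + 60 * (N : ℚ)) / (N : ℚ) ^ 2) ∧
      ((2 + 48 / (N : ℚ) ^ 2) * (multRho t ![1, 1, N, N] F : ℚ) ≤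
          2 * 1 + 3 * 1 + (32 * 1 + 36 * 1 + 60 * (N : ℚ) + 60 * (N : ℚ)) / (N : ℚ) ^ 2)) :
    ¬ t ∣ a ∧ ¬ t ∣ b := by
  classical
  obtain ⟨d₀, hd₀⟩ := hF
  have htne : t ≠ 0 := ht.ne_zero
  have hGcoeff : ∀ d : Fin 4 →₀ ℕ, d 2 = 0 → d 3 = 0 → G.coeff d = 0 := by
    rw [Ideal.mem_span_pair] at hG
    obtain ⟨p, q, hpq⟩ := hG
    intro d h2 h3
    have h2' : (2 : Fin 4) ∉ d.support := by simp [Finsupp.mem_support_iff, h2]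
    have h3' : (3 : Fin 4) ∉ d.support := by simp [Finsupp.mem_support_iff, h3]
    rw [← hpq, coeff_add, coeff_mul_X', coeff_mul_X', if_neg h2', if_neg h3', add_zero]
  have hdeg : ∀ d : Fin 4 →₀ ℕ, F.coeff d ≠ 0 → 3 * d 0 + 2 * d 1 + d 2 + d 3 = 6 := by
    intro d hd
    have h := hhom hd
    rw [Finsupp.weight_apply, Finsupp.sum_fintype _ _ (fun i => by simp)] at h
    simp only [Fin.sum_univ_four, smul_eq_mul, Matrix.cons_val_zero, Matrix.cons_val_one,
      Matrix.head_cons, Matrix.cons_val_two, Matrix.tail_cons, Matrix.cons_val_three] at h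
    omega
  have hca : F.coeff (Finsupp.single 0 2) = a := by
    rw [hdecomp]
    rw [coeff_add, coeff_add, coeff_C_mul, coeff_C_mul, coeff_X_pow, coeff_X_pow]
    rw [hGcoeff _ (by simp [Finsupp.single_apply]) (by simp [Finsupp.single_apply])]
    rw [if_pos rfl, if_neg (by
      intro hh
      have := DFunLike.congr_fun hh 1
      simp [Finsupp.single_apply] at this)]
    ring
  have hcb : F.coeff (Finsupp.single 1 3) = b := by
    rw [hdecomp]
    rw [coeff_add, coeff_add, coeff_C_mul, coeff_C_mul, coeff_X_pow, coeff_X_pow]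
    rw [hGcoeff _ (by simp [Finsupp.single_apply]) (by simp [Finsupp.single_apply])]
    rw [if_pos rfl, if_neg (by
      intro hh
      have := DFunLike.congr_fun hh 0
      simp [Finsupp.single_apply] at this)]
    ring
  constructor
  · -- ¬ t ∣ a, via ρ = (1,1,200,200)
    intro hta
    have hm : 3 ≤ multRho t ![1, 1, 200, 200] F := by
      apply le_multRho htne _ hd₀
      intro d
      rw [coeff_rhoAct]
      by_cases hc : F.coeff d = 0
      · simp [hc]
      have h6 := hdeg d hc
      have he : ∑ i, (![1, 1, 200, 200] : Fin 4 → ℕ) i * d i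
          = 1 * d 0 + 1 * d 1 + 200 * d 2 + 200 * d 3 := by
        simp [Fin.sum_univ_four]
      rw [he]
      by_cases h23 : d 2 = 0 ∧ d 3 = 0
      · obtain ⟨h2, h3⟩ := h23
        rcases (by omega : (d 0 = 2 ∧ d 1 = 0) ∨ (d 0 = 0 ∧ d 1 = 3)) with ⟨h0, h1d⟩ | ⟨h0, h1d⟩
        · have hd' : d = Finsupp.single 0 2 := by
            ext i; fin_cases i <;> simp [Finsupp.single_apply, h0, h1d, h2, h3]
          rw [h0, h1d, h2, h3, hd', hca]
          obtain ⟨a', rfl⟩ := hta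
          exact ⟨a', by ring⟩
        · rw [h0, h1d, h2, h3]
          norm_num
      · have hge : 3 ≤ 1 * d 0 + 1 * d 1 + 200 * d 2 + 200 * d 3 := by omega
        exact (pow_dvd_pow t hge).mul_right _
    have h1 := (hineq 200 (by norm_num)).2
    have h2 : (3 : ℚ) ≤ (multRho t ![1, 1, 200, 200] F : ℚ) := by exact_mod_cast hm
    push_cast at h1
    nlinarith
  · -- ¬ t ∣ b, via ρ = (2,1,200,200)
    intro htb
    have hm : 4 ≤ multRho t ![2, 1, 200, 200] F := by
      apply le_multRho htne _ hd₀
      intro d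
      rw [coeff_rhoAct]
      by_cases hc : F.coeff d = 0
      · simp [hc]
      have h6 := hdeg d hc
      have he : ∑ i, (![2, 1, 200, 200] : Fin 4 → ℕ) i * d i
          = 2 * d 0 + 1 * d 1 + 200 * d 2 + 200 * d 3 := by
        simp [Fin.sum_univ_four]
      rw [he]
      by_cases h23 : d 2 = 0 ∧ d 3 = 0
      · obtain ⟨h2, h3⟩ := h23
        rcases (by omega : (d 0 = 2 ∧ d 1 = 0) ∨ (d 0 = 0 ∧ d 1 = 3)) with ⟨h0, h1d⟩ | ⟨h0, h1d⟩
        · rw [h0, h1d, h2, h3]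
          norm_num
        · have hd' : d = Finsupp.single 1 3 := by
            ext i; fin_cases i <;> simp [Finsupp.single_apply, h0, h1d, h2, h3]
          rw [h0, h1d, h2, h3, hd', hcb]
          obtain ⟨b', rfl⟩ := htb
          exact ⟨b', by ring⟩
      · have hge : 4 ≤ 2 * d 0 + 1 * d 1 + 200 * d 2 + 200 * d 3 := by omega
        exact (pow_dvd_pow t hge).mul_right _
    have h1 := (hineq 200 (by norm_num)).1
    have h2 : (4 : ℚ) ≤ (multRho t ![2, 1, 200, 200] F : ℚ) := by exact_mod_cast hm
    push_cast at h1
    nlinarith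
end
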